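/- (Main theorem) A finite simple semigroup S = M(G; I, Λ; P) with normalized matrix P is an equational domain in the semigroup language with constants if and only if (1) P is nonsingular (no two equal rows, no two equal columns) and (2) G is an equational domain in the group language with constants (equivalently, G has no zero-divisors). -/

import Mathlib

namespace Stmt

/-- Evaluation of a single letter (variable or constant). -/
def evalL {S : Type*} {n : ℕ} (p : Fin n → S) : Fin n ⊕ S → S
  | Sum.inl i => p i
  | Sum.inr s => s

/-- A semigroup term with constants: a nonempty word in variables `x₁,…,xₙ`
and constants from `S` (head letter together with the remaining letters). -/
abbrev SgTerm (S : Type*) (n : ℕ) : Type _ := (Fin n ⊕ S) × List (Fin n ⊕ S)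

/-- Value of a term at a point, w.r.t. an explicit binary operation `mul`. -/
def SgTerm.eval {S : Type*} {n : ℕ} (mul : S → S → S) (t : SgTerm S n)
    (p : Fin n → S) : S :=
  t.2.foldl (fun a l => mul a (evalL p l)) (evalL p t.1)

/-- `Y ⊆ Sⁿ` is algebraic: it is the solution set of a system of equations
`t(X) = s(X)` between semigroup terms with constants. -/
def IsAlgebraic {S : Type*} {n : ℕ} (mul : S → S → S) (Y : Set (Fin n → S)) : Prop :=
  ∃ Sys : Set (SgTerm S n × SgTerm S n),
    Y = {p | ∀ e ∈ Sys, SgTerm.eval mul e.1 p = SgTerm.eval mul e.2 p}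

/-- `S` is an equational domain: every finite union of algebraic sets is algebraic. -/
def IsEqDomain (S : Type*) (mul : S → S → S) : Prop :=
  ∀ (n m : ℕ) (Y : Fin m → Set (Fin n → S)),
    (∀ i, IsAlgebraic mul (Y i)) → IsAlgebraic mul (⋃ i, Y i)

/-- A group term with constants: a word in integer powers of variables and
constants from `G`, i.e. an element of `F(X) ∗ G`. -/
abbrev GTerm (G : Type*) (n : ℕ) : Type _ := List ((Fin n × ℤ) ⊕ G)

/-- Value of a group term at a point. -/
def GTerm.eval {G : Type*} [Group G] {n : ℕ} (t : GTerm G n) (p : Fin n → G) : G :=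
  (t.map (fun l => match l with
    | Sum.inl (i, k) => p i ^ k
    | Sum.inr g => g)).prod

/-- `Y ⊆ Gⁿ` is algebraic over the group `G` (group equations with constants). -/
def IsGAlgebraic {G : Type*} [Group G] {n : ℕ} (Y : Set (Fin n → G)) : Prop :=
  ∃ Sys : Set (GTerm G n × GTerm G n),
    Y = {p | ∀ e ∈ Sys, GTerm.eval e.1 p = GTerm.eval e.2 p}

/-- `G` is an equational domain as a group. -/
def IsGEqDomain (G : Type*) [Group G] : Prop :=
  ∀ (n m : ℕ) (Y : Fin m → Set (Fin n → G)),
    (∀ i, IsGAlgebraic (Y i)) → IsGAlgebraic (⋃ i, Y i)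

/-- Multiplication of the Rees matrix semigroup `M(G; I, Λ; P)` on `Λ × G × I`:
`(λ,g,i)(μ,h,j) = (λ, g · p_{iμ} · h, j)`. -/
def reesMul {G I Λ : Type*} [Group G] (P : I → Λ → G) (a b : Λ × G × I) : Λ × G × I :=
  (a.1, a.2.1 * P a.2.2 b.1 * b.2.1, b.2.2)

/-- `P` is normalized w.r.t. the distinguished indices `i0 ∈ I`, `l0 ∈ Λ`:
its first row and first column consist of identity elements. -/
def Normalized {G I Λ : Type*} [Group G] (P : I → Λ → G) (i0 : I) (l0 : Λ) : Prop :=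
  (∀ i, P i l0 = 1) ∧ (∀ l, P i0 l = 1)

/-- `P` is nonsingular: no two equal rows and no two equal columns. -/
def Nonsingular {G I Λ : Type*} [Group G] (P : I → Λ → G) : Prop :=
  (∀ i j : I, (∀ l, P i l = P j l) → i = j) ∧
  (∀ l m : Λ, (∀ i, P i l = P i m) → l = m)

/-! ### Chunk 1: generic machinery for semigroup terms -/

lemma iUnion_succ_eq {α : Type*} {m : ℕ} (Y : Fin (m+1) → Set α) :
    (⋃ i, Y i) = Y 0 ∪ ⋃ i : Fin m, Y i.succ := by
  ext x
  simp only [Set.mem_iUnion, Set.mem_union]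
  constructor
  · rintro ⟨i, hi⟩
    rcases Fin.eq_zero_or_eq_succ i with rfl | ⟨j, rfl⟩
    · exact Or.inl hi
    · exact Or.inr ⟨j, hi⟩
  · rintro (h | ⟨j, hj⟩)
    · exact ⟨0, h⟩
    · exact ⟨j.succ, hj⟩


section SgMachinery
variable {S : Type*} {n k : ℕ} (mul : S → S → S)

def toL (t : SgTerm S n) : List (Fin n ⊕ S) := t.1 :: t.2

def evalList (p : Fin n → S) (L : List (Fin n ⊕ S)) (a : S) : S :=
  L.foldl (fun x l => mul x (evalL p l)) a

lemma eval_eq_evalList (t : SgTerm S n) (p : Fin n → S) :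
    SgTerm.eval mul t p = evalList mul p t.2 (evalL p t.1) := rfl

lemma evalList_append (p : Fin n → S) (L L' : List (Fin n ⊕ S)) (a : S) :
    evalList mul p (L ++ L') a = evalList mul p L' (evalList mul p L a) :=
  List.foldl_append ..

variable (hA : ∀ a b c, mul (mul a b) c = mul a (mul b c))
include hA

lemma evalList_mul (p : Fin n → S) (L : List (Fin n ⊕ S)) (a b : S) :
    evalList mul p L (mul a b) = mul a (evalList mul p L b) := by
  induction L generalizing b with
  | nil => rfl
  | cons ℓ L ih =>
    simp only [evalList, List.foldl_cons] at *
    rw [hA, ih]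

def tcat (t u : SgTerm S n) : SgTerm S n := (t.1, t.2 ++ toL u)

lemma eval_tcat (t u : SgTerm S n) (p : Fin n → S) :
    SgTerm.eval mul (tcat t u) p = mul (SgTerm.eval mul t p) (SgTerm.eval mul u p) := by
  simp only [tcat, eval_eq_evalList, toL]
  rw [evalList_append]
  show evalList mul p u.2 (mul _ (evalL p u.1)) = _
  rw [evalList_mul mul hA]

omit hA

lemma isAlgebraic_iInter {ι : Type*} {Y : ι → Set (Fin n → S)}
    (hY : ∀ i, IsAlgebraic mul (Y i)) : IsAlgebraic mul (⋂ i, Y i) := by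
  choose Sys hSys using hY
  refine ⟨⋃ i, Sys i, ?_⟩
  ext p
  simp only [Set.mem_iInter, Set.mem_setOf_eq, Set.mem_iUnion]
  constructor
  · rintro h e ⟨i, hi⟩
    have := h i
    rw [hSys i] at this
    exact this e hi
  · intro h i
    rw [hSys i]
    exact fun e he => h e ⟨i, he⟩

lemma isAlgebraic_univ : IsAlgebraic mul (Set.univ : Set (Fin n → S)) :=
  ⟨∅, by ext p; simp⟩

lemma isAlgebraic_empty (c d : S) (hcd : c ≠ d) :
    IsAlgebraic mul (∅ : Set (Fin n → S)) := by
  refine ⟨{((Sum.inr c, []), (Sum.inr d, []))}, ?_⟩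
  ext p
  simp only [Set.mem_empty_iff_false, Set.mem_setOf_eq, Set.mem_singleton_iff, false_iff]
  intro h
  have := h ((Sum.inr c, []), (Sum.inr d, [])) rfl
  exact hcd this

def expandS (σ : Fin k → SgTerm S n) : (Fin k ⊕ S) → SgTerm S n
  | Sum.inl j => σ j
  | Sum.inr s => (Sum.inr s, [])

def substS (σ : Fin k → SgTerm S n) (t : SgTerm S k) : SgTerm S n :=
  t.2.foldl (fun acc ℓ => tcat acc (expandS σ ℓ)) (expandS σ t.1)

include hA

lemma eval_expandS (σ : Fin k → SgTerm S n) (p : Fin n → S) (ℓ : Fin k ⊕ S) :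
    SgTerm.eval mul (expandS σ ℓ) p = evalL (fun j => SgTerm.eval mul (σ j) p) ℓ := by
  cases ℓ <;> rfl

lemma eval_substS (σ : Fin k → SgTerm S n) (t : SgTerm S k) (p : Fin n → S) :
    SgTerm.eval mul (substS σ t) p
      = SgTerm.eval mul t (fun j => SgTerm.eval mul (σ j) p) := by
  obtain ⟨h, L⟩ := t
  induction L using List.reverseRecOn with
  | nil => exact eval_expandS mul hA σ p h
  | append_singleton L ℓ ih =>
    show SgTerm.eval mul (substS σ (h, L ++ [ℓ])) p = _
    have : substS σ (h, L ++ [ℓ]) = tcat (substS σ (h, L)) (expandS σ ℓ) := by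
      simp [substS, List.foldl_append]
    rw [this, eval_tcat mul hA, ih, eval_expandS mul hA]
    show _ = SgTerm.eval mul (h, L ++ [ℓ]) _
    simp only [eval_eq_evalList, evalList_append]
    rfl

lemma isAlgebraic_preimage (σ : Fin k → SgTerm S n) {Y : Set (Fin k → S)}
    (hY : IsAlgebraic mul Y) :
    IsAlgebraic mul {p : Fin n → S | (fun j => SgTerm.eval mul (σ j) p) ∈ Y} := by
  obtain ⟨Sys, hSys⟩ := hY
  refine ⟨(fun e => (substS σ e.1, substS σ e.2)) '' Sys, ?_⟩
  ext p
  simp only [Set.mem_setOf_eq, hSys, Set.mem_image, forall_exists_index]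
  constructor
  · rintro h e' e ⟨he, rfl⟩
    simp only [eval_substS mul hA]
    exact h e he
  · intro h e he
    have := h _ e ⟨he, rfl⟩
    simpa only [eval_substS mul hA] using this

lemma isAlgebraic_union
    (hD : IsAlgebraic mul {p : Fin 4 → S | p 0 = p 1 ∨ p 2 = p 3})
    {Y₁ Y₂ : Set (Fin n → S)} (h1 : IsAlgebraic mul Y₁) (h2 : IsAlgebraic mul Y₂) :
    IsAlgebraic mul (Y₁ ∪ Y₂) := by
  obtain ⟨S₁, hS₁⟩ := h1
  obtain ⟨S₂, hS₂⟩ := h2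
  have key : Y₁ ∪ Y₂ = ⋂ (e₁ : S₁) (e₂ : S₂),
      {p : Fin n → S | (fun j => SgTerm.eval mul
        ((![e₁.1.1, e₁.1.2, e₂.1.1, e₂.1.2] : Fin 4 → SgTerm S n) j) p)
          ∈ {q : Fin 4 → S | q 0 = q 1 ∨ q 2 = q 3}} := by
    ext p
    simp only [Set.mem_union, Set.mem_iInter, Set.mem_setOf_eq, Matrix.cons_val_zero,
      Matrix.cons_val_one, Matrix.head_cons, Matrix.cons_val_two, Matrix.tail_cons,
      Matrix.cons_val_three]
    constructor
    · rintro (hp | hp) ⟨e₁, he₁⟩ ⟨e₂, he₂⟩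
      · left; rw [hS₁] at hp; exact hp e₁ he₁
      · right; rw [hS₂] at hp; exact hp e₂ he₂
    · intro h
      by_cases hp1 : p ∈ Y₁
      · exact Or.inl hp1
      right
      rw [hS₂]
      intro e₂ he₂
      rw [hS₁] at hp1
      simp only [Set.mem_setOf_eq, not_forall] at hp1
      obtain ⟨e₁, he₁, hne⟩ := hp1
      rcases h ⟨e₁, he₁⟩ ⟨e₂, he₂⟩ with h' | h'
      · exact absurd h' hne
      · exact h'
  rw [key]
  exact isAlgebraic_iInter mul fun e₁ => isAlgebraic_iInter mul fun e₂ =>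
    isAlgebraic_preimage mul hA _ hD

lemma isEqDomain_of_dom (hne : ∃ c d : S, c ≠ d)
    (hD : IsAlgebraic (n := 4) mul {p | p 0 = p 1 ∨ p 2 = p 3}) :
    IsEqDomain S mul := by
  intro n m Y hY
  induction m with
  | zero =>
    rw [Set.iUnion_of_empty]
    obtain ⟨c, d, hcd⟩ := hne
    exact isAlgebraic_empty mul c d hcd
  | succ m ih =>
    rw [iUnion_succ_eq]
    exact isAlgebraic_union (S := S) mul hA hD (hY 0)
      (ih (fun i => Y i.succ) (fun i => hY i.succ))

end SgMachinery

/-! ### Chunk 2: machinery for group terms -/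

section GMachinery
variable {G : Type*} [Group G] {n k : ℕ}

def letterVal (p : Fin n → G) : (Fin n × ℤ) ⊕ G → G
  | Sum.inl (i, j) => p i ^ j
  | Sum.inr g => g

lemma gEval_eq (t : GTerm G n) (p : Fin n → G) :
    GTerm.eval t p = (t.map (letterVal p)).prod := by
  unfold GTerm.eval letterVal
  congr 1

lemma gEval_nil (p : Fin n → G) : GTerm.eval ([] : GTerm G n) p = 1 := rfl

lemma gEval_append (t u : GTerm G n) (p : Fin n → G) :
    GTerm.eval (t ++ u) p = GTerm.eval t p * GTerm.eval u p := by
  simp [gEval_eq, List.map_append, List.prod_append]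

lemma gEval_cons (ℓ : (Fin n × ℤ) ⊕ G) (t : GTerm G n) (p : Fin n → G) :
    GTerm.eval (ℓ :: t) p = letterVal p ℓ * GTerm.eval t p := by
  simp [gEval_eq, List.map_cons, List.prod_cons]

lemma gEval_concat (t : GTerm G n) (ℓ : (Fin n × ℤ) ⊕ G) (p : Fin n → G) :
    GTerm.eval (t ++ [ℓ]) p = GTerm.eval t p * letterVal p ℓ := by
  rw [gEval_append, gEval_cons, gEval_nil, mul_one]

def invLetter : (Fin n × ℤ) ⊕ G → (Fin n × ℤ) ⊕ G
  | Sum.inl (i, j) => Sum.inl (i, -j)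
  | Sum.inr g => Sum.inr g⁻¹

lemma letterVal_invLetter (p : Fin n → G) (ℓ : (Fin n × ℤ) ⊕ G) :
    letterVal p (invLetter ℓ) = (letterVal p ℓ)⁻¹ := by
  rcases ℓ with ⟨i, j⟩ | g
  · simp [letterVal, invLetter, zpow_neg]
  · rfl

def invG (t : GTerm G n) : GTerm G n := (t.reverse).map invLetter

lemma gEval_invG (t : GTerm G n) (p : Fin n → G) :
    GTerm.eval (invG t) p = (GTerm.eval t p)⁻¹ := by
  induction t with
  | nil => simp [invG, gEval_nil]
  | cons ℓ t ih =>
    have : invG (ℓ :: t) = invG t ++ [invLetter ℓ] := by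
      simp [invG, List.reverse_cons]
    rw [this, gEval_concat, ih, gEval_cons, letterVal_invLetter, mul_inv_rev]

def npowG (t : GTerm G n) : ℕ → GTerm G n
  | 0 => []
  | m+1 => t ++ npowG t m

lemma gEval_npowG (t : GTerm G n) (m : ℕ) (p : Fin n → G) :
    GTerm.eval (npowG t m) p = (GTerm.eval t p) ^ m := by
  induction m with
  | zero => simp [npowG, gEval_nil]
  | succ m ih => rw [npowG, gEval_append, ih, pow_succ']

def zpowG (t : GTerm G n) (j : ℤ) : GTerm G n :=
  if 0 ≤ j then npowG t j.toNat else npowG (invG t) (-j).toNat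

lemma gEval_zpowG (t : GTerm G n) (j : ℤ) (p : Fin n → G) :
    GTerm.eval (zpowG t j) p = (GTerm.eval t p) ^ j := by
  unfold zpowG
  split_ifs with h
  · rw [gEval_npowG, ← zpow_natCast, Int.toNat_of_nonneg h]
  · rw [gEval_npowG, gEval_invG, ← zpow_natCast, Int.toNat_of_nonneg (by omega)]
    group

def substG (σ : Fin k → GTerm G n) (t : GTerm G k) : GTerm G n :=
  t.flatMap (fun ℓ => match ℓ with
    | Sum.inl (i, j) => zpowG (σ i) j
    | Sum.inr g => [Sum.inr g])

lemma gEval_substG (σ : Fin k → GTerm G n) (t : GTerm G k) (p : Fin n → G) :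
    GTerm.eval (substG σ t) p = GTerm.eval t (fun i => GTerm.eval (σ i) p) := by
  induction t with
  | nil => rfl
  | cons ℓ t ih =>
    have : substG σ (ℓ :: t) = (match ℓ with
        | Sum.inl (i, j) => zpowG (σ i) j
        | Sum.inr g => [Sum.inr g]) ++ substG σ t := by
      simp [substG, List.flatMap_cons]
    rw [this, gEval_append, ih, gEval_cons]
    congr 1
    rcases ℓ with ⟨i, j⟩ | g
    · rw [gEval_zpowG]; rfl
    · simp [gEval_cons, gEval_nil, mul_one]; rfl

lemma isGAlgebraic_iInter {ι : Type*} {Y : ι → Set (Fin n → G)}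
    (hY : ∀ i, IsGAlgebraic (Y i)) : IsGAlgebraic (⋂ i, Y i) := by
  choose Sys hSys using hY
  refine ⟨⋃ i, Sys i, ?_⟩
  ext p
  simp only [Set.mem_iInter, Set.mem_setOf_eq, Set.mem_iUnion]
  constructor
  · rintro h e ⟨i, hi⟩
    have := h i
    rw [hSys i] at this
    exact this e hi
  · intro h i
    rw [hSys i]
    exact fun e he => h e ⟨i, he⟩

lemma isGAlgebraic_empty (c : G) (hc : c ≠ 1) :
    IsGAlgebraic (∅ : Set (Fin n → G)) := by
  refine ⟨{([Sum.inr c], [])}, ?_⟩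
  ext p
  simp only [Set.mem_empty_iff_false, Set.mem_setOf_eq, Set.mem_singleton_iff, false_iff]
  intro h
  have := h ([Sum.inr c], []) rfl
  rw [gEval_cons, gEval_nil, mul_one] at this
  exact hc this

lemma isGAlgebraic_preimage (σ : Fin k → GTerm G n) {Y : Set (Fin k → G)}
    (hY : IsGAlgebraic Y) :
    IsGAlgebraic {p : Fin n → G | (fun j => GTerm.eval (σ j) p) ∈ Y} := by
  obtain ⟨Sys, hSys⟩ := hY
  refine ⟨(fun e => (substG σ e.1, substG σ e.2)) '' Sys, ?_⟩
  ext p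
  simp only [Set.mem_setOf_eq, hSys, Set.mem_image, forall_exists_index]
  constructor
  · rintro h e' e ⟨he, rfl⟩
    simp only [gEval_substG]
    exact h e he
  · intro h e he
    have := h _ e ⟨he, rfl⟩
    simpa only [gEval_substG] using this

/-- `x = 1 ∨ y = 1` as a subset of `G²`. -/
def GDom (G : Type*) [Group G] : Set (Fin 2 → G) := {q | q 0 = 1 ∨ q 1 = 1}

lemma isGAlgebraic_union (hD : IsGAlgebraic (GDom G))
    {Y₁ Y₂ : Set (Fin n → G)} (h1 : IsGAlgebraic Y₁) (h2 : IsGAlgebraic Y₂) :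
    IsGAlgebraic (Y₁ ∪ Y₂) := by
  obtain ⟨S₁, hS₁⟩ := h1
  obtain ⟨S₂, hS₂⟩ := h2
  have heq : ∀ (e : GTerm G n × GTerm G n) p,
      GTerm.eval (e.1 ++ invG e.2) p = 1 ↔ GTerm.eval e.1 p = GTerm.eval e.2 p := by
    intro e p
    rw [gEval_append, gEval_invG, mul_inv_eq_one]
  have key : Y₁ ∪ Y₂ = ⋂ (e₁ : S₁) (e₂ : S₂),
      {p : Fin n → G | (fun j => GTerm.eval
        ((![e₁.1.1 ++ invG e₁.1.2, e₂.1.1 ++ invG e₂.1.2] : Fin 2 → GTerm G n) j) p)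
          ∈ GDom G} := by
    ext p
    simp only [Set.mem_union, Set.mem_iInter, Set.mem_setOf_eq, GDom,
      Matrix.cons_val_zero, Matrix.cons_val_one, Matrix.head_cons]
    constructor
    · rintro (hp | hp) ⟨e₁, he₁⟩ ⟨e₂, he₂⟩
      · left; rw [hS₁] at hp; exact (heq e₁ p).2 (hp e₁ he₁)
      · right; rw [hS₂] at hp; exact (heq e₂ p).2 (hp e₂ he₂)
    · intro h
      by_cases hp1 : p ∈ Y₁
      · exact Or.inl hp1
      right
      rw [hS₂]
      intro e₂ he₂
      rw [hS₁] at hp1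
      simp only [Set.mem_setOf_eq, not_forall] at hp1
      obtain ⟨e₁, he₁, hne⟩ := hp1
      rcases h ⟨e₁, he₁⟩ ⟨e₂, he₂⟩ with h' | h'
      · exact absurd ((heq e₁ p).1 h') hne
      · exact (heq e₂ p).1 h'
  rw [key]
  exact isGAlgebraic_iInter fun e₁ => isGAlgebraic_iInter fun e₂ =>
    isGAlgebraic_preimage _ hD

/-- no zero divisors -/
def NZD (G : Type*) [Group G] : Prop :=
  ∀ a b : G, (∀ g : G, a * (g * b * g⁻¹) = (g * b * g⁻¹) * a) → a = 1 ∨ b = 1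

lemma gdom_algebraic_of_nzd (h : NZD G) : IsGAlgebraic (GDom G) := by
  classical
  refine ⟨Set.range (fun g : G =>
    (([Sum.inl ((0 : Fin 2), (1 : ℤ)), Sum.inr g, Sum.inl ((1 : Fin 2), (1 : ℤ)), Sum.inr g⁻¹] :
        GTerm G 2),
     ([Sum.inr g, Sum.inl ((1 : Fin 2), (1 : ℤ)), Sum.inr g⁻¹, Sum.inl ((0 : Fin 2), (1 : ℤ))] :
        GTerm G 2))), ?_⟩
  have hev : ∀ (g : G) (p : Fin 2 → G),
      (GTerm.eval ([Sum.inl ((0 : Fin 2), (1 : ℤ)), Sum.inr g, Sum.inl ((1 : Fin 2), (1 : ℤ)),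
          Sum.inr g⁻¹] : GTerm G 2) p = p 0 * (g * p 1 * g⁻¹)) ∧
      (GTerm.eval ([Sum.inr g, Sum.inl ((1 : Fin 2), (1 : ℤ)), Sum.inr g⁻¹,
          Sum.inl ((0 : Fin 2), (1 : ℤ))] : GTerm G 2) p = (g * p 1 * g⁻¹) * p 0) := by
    intro g p
    constructor <;>
      simp [gEval_cons, gEval_nil, letterVal, zpow_one, mul_assoc]
  ext p
  simp only [GDom, Set.mem_setOf_eq, Set.mem_range, forall_exists_index]
  constructor
  · rintro (h0 | h1) e g rfl
    · rw [(hev g p).1, (hev g p).2, h0, one_mul, mul_one]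
    · rw [(hev g p).1, (hev g p).2, h1]
      group
  · intro hp
    refine h (p 0) (p 1) fun g => ?_
    have := hp _ g rfl
    rwa [(hev g p).1, (hev g p).2] at this
  

lemma isGEqDomain_of_nzd [Nontrivial G] (h : NZD G) : IsGEqDomain G := by
  obtain ⟨c, hc⟩ := exists_ne (1 : G)
  have hD := gdom_algebraic_of_nzd h
  intro n m Y hY
  induction m with
  | zero =>
    rw [Set.iUnion_of_empty]
    exact isGAlgebraic_empty c hc
  | succ m ih =>
    rw [iUnion_succ_eq]
    exact isGAlgebraic_union hD (hY 0) (ih (fun i => Y i.succ) (fun i => hY i.succ))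

end GMachinery

/-! ### Chunk 3: the centralizer decomposition argument -/

section Mu
variable {G : Type*} [Group G]

/-- N = normal closure of b, Z = its centralizer. -/
def Ncl (b : G) : Subgroup G := Subgroup.normalClosure {b}

def Zcl (b : G) : Subgroup G := Subgroup.centralizer (Ncl b : Set G)

lemma ncl_normal (b : G) : (Ncl b).Normal := Subgroup.normalClosure_normal

lemma mem_ncl_self (b : G) : b ∈ Ncl b :=
  Subgroup.subset_normalClosure rfl

lemma comm_of_zcl {b z ν : G} (hz : z ∈ Zcl b) (hν : ν ∈ Ncl b) :
    ν * z = z * ν := hz ν hν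

lemma zcl_normal (b : G) : (Zcl b).Normal := by
  constructor
  intro z hz g
  intro ν hν
  have h1 : g⁻¹ * ν * g ∈ Ncl b := by
    have := (ncl_normal b).conj_mem ν hν g⁻¹
    simpa using this
  have h2 := comm_of_zcl hz h1
  -- (g z g⁻¹) ν = ν (g z g⁻¹)
  have : g * ((g⁻¹ * ν * g) * z) * g⁻¹ = g * (z * (g⁻¹ * ν * g)) * g⁻¹ := by rw [h2]
  calc ν * (g * z * g⁻¹) = g * ((g⁻¹ * ν * g) * z) * g⁻¹ := by group
    _ = g * (z * (g⁻¹ * ν * g)) * g⁻¹ := this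
    _ = (g * z * g⁻¹) * ν := by group

lemma mem_zcl_of_comm {a b : G} (h : ∀ g : G, a * (g * b * g⁻¹) = (g * b * g⁻¹) * a) :
    a ∈ Zcl b := by
  have hsub : Ncl b ≤ Subgroup.centralizer {a} := by
    rw [Ncl, Subgroup.normalClosure]
    refine (Subgroup.closure_le _).2 ?_
    intro x hx
    rw [Group.mem_conjugatesOfSet_iff] at hx
    obtain ⟨c, hc, hconj⟩ := hx
    rcases hc with rfl
    obtain ⟨u, hu⟩ := hconj
    rw [SemiconjBy] at hu
    have hx : x = (u : G) * c * (u : G)⁻¹ := eq_mul_inv_of_mul_eq hu.symm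
    rw [SetLike.mem_coe, Subgroup.mem_centralizer_iff]
    intro y hy
    rcases hy with rfl
    rw [hx]
    exact h (u : G)
  intro ν hν
  have := hsub hν
  rw [Subgroup.mem_centralizer_iff] at this
  exact (this a rfl).symm

/-- The four-run middle invariant. -/
def InvM (b : G) (m1 m2 m3 m4 : G) : Prop :=
  ∃ α β, α ∈ Zcl b ∧ β ∈ Ncl b ∧ m2 = α * m4 ∧ m3 = β * m4 ∧ m1 = α * β * m4

lemma invM_const (b m : G) : InvM b m m m m :=
  ⟨1, 1, one_mem _, one_mem _, by simp, by simp, by simp⟩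

lemma invM_K1 {b m1 m2 m3 m4 : G} (c : G) (h : InvM b m1 m2 m3 m4) :
    InvM b (m1 * c) (m2 * c) (m3 * c) (m4 * c) := by
  obtain ⟨α, β, hα, hβ, e2, e3, e1⟩ := h
  exact ⟨α, β, hα, hβ, by rw [e2, mul_assoc], by rw [e3, mul_assoc], by rw [e1, mul_assoc]⟩

lemma invM_K2 {b m1 m2 m3 m4 z : G} (hz : z ∈ Zcl b) (h : InvM b m1 m2 m3 m4) :
    InvM b (m1 * z) (m2 * z) m3 m4 := by
  obtain ⟨α, β, hα, hβ, e2, e3, e1⟩ := h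
  refine ⟨α * (m4 * z * m4⁻¹), β, ?_, hβ, ?_, e3, ?_⟩
  · exact mul_mem hα ((zcl_normal b).conj_mem z hz m4)
  · rw [e2]; group
  · rw [e1]
    have hcomm : β * (m4 * z * m4⁻¹) = (m4 * z * m4⁻¹) * β :=
      comm_of_zcl ((zcl_normal b).conj_mem z hz m4) hβ
    calc α * β * m4 * z = α * (β * (m4 * z * m4⁻¹)) * m4 := by group
      _ = α * ((m4 * z * m4⁻¹) * β) * m4 := by rw [hcomm]
      _ = α * (m4 * z * m4⁻¹) * β * m4 := by group

lemma invM_K3 {b m1 m2 m3 m4 ν : G} (hν : ν ∈ Ncl b) (h : InvM b m1 m2 m3 m4) :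
    InvM b (m1 * ν) m2 (m3 * ν) m4 := by
  obtain ⟨α, β, hα, hβ, e2, e3, e1⟩ := h
  refine ⟨α, β * (m4 * ν * m4⁻¹), hα, ?_, e2, ?_, ?_⟩
  · exact mul_mem hβ ((ncl_normal b).conj_mem ν hν m4)
  · rw [e3]; group
  · rw [e1]; group

lemma invM_conclusion {b m1 m2 m3 m4 : G} (h : InvM b m1 m2 m3 m4) :
    m1 = m2 * m4⁻¹ * m3 := by
  obtain ⟨α, β, _, _, e2, e3, e1⟩ := h
  rw [e1, e2, e3]
  group

end Mu

/-! ### Chunk 4: IsGEqDomain → NZD, and nontriviality -/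

section GNZD
variable {G : Type*} [Group G]

lemma invM_gterm (a b : G) (ha : a ∈ Zcl b) (t : GTerm G 2) :
    InvM b (GTerm.eval t ![a, b]) (GTerm.eval t ![a, 1])
      (GTerm.eval t ![1, b]) (GTerm.eval t ![1, 1]) := by
  induction t using List.reverseRecOn with
  | nil => simpa [gEval_nil] using invM_const b 1
  | append_singleton t ℓ ih =>
    simp only [gEval_concat]
    rcases ℓ with ⟨i, j⟩ | g
    · by_cases hi : i = 0
      case pos =>
        subst hi
        have h1 : letterVal (![a, b] : Fin 2 → G) (Sum.inl (0, j)) = a ^ j := rfl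
        have h2 : letterVal (![a, 1] : Fin 2 → G) (Sum.inl (0, j)) = a ^ j := rfl
        have h3 : letterVal (![1, b] : Fin 2 → G) (Sum.inl (0, j)) = (1 : G) ^ j := rfl
        have h4 : letterVal (![1, 1] : Fin 2 → G) (Sum.inl (0, j)) = (1 : G) ^ j := rfl
        rw [h1, h2, h3, h4, one_zpow, mul_one, mul_one]
        exact invM_K2 (zpow_mem ha j) ih
      case neg =>
        have hi1 : i = 1 := by omega
        subst hi1
        have h1 : letterVal (![a, b] : Fin 2 → G) (Sum.inl (1, j)) = b ^ j := rfl
        have h2 : letterVal (![a, 1] : Fin 2 → G) (Sum.inl (1, j)) = (1 : G) ^ j := rfl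
        have h3 : letterVal (![1, b] : Fin 2 → G) (Sum.inl (1, j)) = b ^ j := rfl
        have h4 : letterVal (![1, 1] : Fin 2 → G) (Sum.inl (1, j)) = (1 : G) ^ j := rfl
        rw [h1, h2, h3, h4, one_zpow, mul_one, mul_one]
        exact invM_K3 (zpow_mem (mem_ncl_self b) j) ih
    · exact invM_K1 g ih

lemma nzd_of_isGEqDomain (h : IsGEqDomain G) : NZD G := by
  intro a b hab
  have ha : a ∈ Zcl b := mem_zcl_of_comm hab
  -- GDom is a union of two algebraic sets
  have coordA : ∀ i : Fin 2, IsGAlgebraic {p : Fin 2 → G | p i = 1} := by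
    intro i
    refine ⟨{([Sum.inl (i, (1 : ℤ))], [])}, ?_⟩
    ext p
    simp only [Set.mem_setOf_eq, Set.mem_singleton_iff]
    constructor
    · rintro h0 e rfl
      simp [gEval_cons, gEval_nil, letterVal, h0]
    · intro he
      have := he _ rfl
      simpa [gEval_cons, gEval_nil, letterVal] using this
  have hY : ∀ i : Fin 2, IsGAlgebraic
      ((![{p : Fin 2 → G | p 0 = 1}, {p : Fin 2 → G | p 1 = 1}] : Fin 2 → _) i) := by
    intro i
    fin_cases i
    · exact coordA 0
    · exact coordA 1
  have hU := h 2 2 _ hY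
  have hUeq : (⋃ i, (![{p : Fin 2 → G | p 0 = 1}, {p : Fin 2 → G | p 1 = 1}] :
      Fin 2 → Set (Fin 2 → G)) i) = GDom G := by
    ext p
    simp [GDom, Fin.exists_fin_two]
  rw [hUeq] at hU
  obtain ⟨Sys, hSys⟩ := hU
  have hmem : (![a, b] : Fin 2 → G) ∈ GDom G := by
    rw [hSys]
    intro e he
    have h2 : (![a, 1] : Fin 2 → G) ∈ GDom G := Or.inr rfl
    have h3 : (![1, b] : Fin 2 → G) ∈ GDom G := Or.inl rfl
    have h4 : (![1, 1] : Fin 2 → G) ∈ GDom G := Or.inl rfl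
    rw [hSys] at h2 h3 h4
    have e2 := h2 e he
    have e3 := h3 e he
    have e4 := h4 e he
    have d1 := invM_conclusion (invM_gterm a b ha e.1)
    have d2 := invM_conclusion (invM_gterm a b ha e.2)
    rw [d1, d2, e2, e3, e4]
  exact hmem

lemma nontrivial_of_isGEqDomain (h : IsGEqDomain G) : Nontrivial G := by
  by_contra hG
  rw [not_nontrivial_iff_subsingleton] at hG
  have h0 := h 0 0 (fun i => i.elim0) (fun i => i.elim0)
  obtain ⟨Sys, hSys⟩ := h0
  have : (fun i : Fin 0 => (1 : G)) ∈ (⋃ i : Fin 0, (fun j => j.elim0 : Fin 0 → Set (Fin 0 → G)) i) := by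
    rw [hSys]
    intro e _
    exact Subsingleton.elim _ _
  simp at this

end GNZD

/-! ### Chunk 5: Rees semigroup: basic lemmas and the SDom₄ construction -/

section Rees
variable {G I Λ : Type*} [Group G] {n : ℕ}
variable (P : I → Λ → G) (i0 : I) (l0 : Λ)

lemma reesMul_assoc : ∀ a b c : Λ × G × I,
    reesMul P (reesMul P a b) c = reesMul P a (reesMul P b c) := by
  intro a b c
  simp [reesMul, mul_assoc]

lemma evalList_fst (p : Fin n → Λ × G × I) (L : List (Fin n ⊕ (Λ × G × I)))
    (a : Λ × G × I) : (evalList (reesMul P) p L a).1 = a.1 := by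
  induction L generalizing a with
  | nil => rfl
  | cons ℓ L ih => rw [evalList, List.foldl_cons, ← evalList, ih]; rfl

lemma eval_fst (t : SgTerm (Λ × G × I) n) (p : Fin n → Λ × G × I) :
    (SgTerm.eval (reesMul P) t p).1 = (evalL p t.1).1 := by
  rw [eval_eq_evalList, evalList_fst]

def lastL (t : SgTerm (Λ × G × I) n) : Fin n ⊕ (Λ × G × I) := t.2.getLastD t.1

lemma eval_concat_letter (h : Fin n ⊕ (Λ × G × I)) (L : List (Fin n ⊕ (Λ × G × I)))
    (ℓ : Fin n ⊕ (Λ × G × I)) (p : Fin n → Λ × G × I) :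
    SgTerm.eval (reesMul P) ((h, L ++ [ℓ]) : SgTerm (Λ × G × I) n) p
      = reesMul P (SgTerm.eval (reesMul P) ((h, L) : SgTerm (Λ × G × I) n) p) (evalL p ℓ) := by
  simp only [eval_eq_evalList, evalList_append]
  rfl

lemma eval_snd_last (t : SgTerm (Λ × G × I) n) (p : Fin n → Λ × G × I) :
    (SgTerm.eval (reesMul P) t p).2.2 = (evalL p (lastL t)).2.2 := by
  obtain ⟨h, L⟩ := t
  induction L using List.reverseRecOn with
  | nil => rfl
  | append_singleton L ℓ ih =>
    rw [eval_concat_letter]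
    show (evalL p ℓ).2.2 = _
    have : lastL ((h, L ++ [ℓ]) : SgTerm (Λ × G × I) n) = ℓ := by
      simp [lastL]
    rw [this]

/-- Terms: constants and variables. -/
def constT (s : Λ × G × I) : SgTerm (Λ × G × I) n := (Sum.inr s, [])

def varT (v : Fin n) : SgTerm (Λ × G × I) n := (Sum.inl v, [])

lemma eval_constT (s : Λ × G × I) (p : Fin n → Λ × G × I) :
    SgTerm.eval (reesMul P) (constT s) p = s := rfl

lemma eval_varT (v : Fin n) (p : Fin n → Λ × G × I) :
    SgTerm.eval (reesMul P) (varT v) p = p v := rfl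

/-- Observables. -/
def obsVal (O : I ⊕ Λ) (s : Λ × G × I) : G :=
  match O with
  | Sum.inl i => P i s.1 * s.2.1
  | Sum.inr l => s.2.1 * P s.2.2 l

def obsT (O : I ⊕ Λ) (v : Fin n) : SgTerm (Λ × G × I) n :=
  match O with
  | Sum.inl i => tcat (constT (l0, 1, i)) (tcat (varT v) (constT (l0, 1, i0)))
  | Sum.inr l => tcat (constT (l0, 1, i0)) (tcat (varT v) (constT (l, 1, i0)))

variable (hP : Normalized P i0 l0)
include hP

lemma eval_obsT (O : I ⊕ Λ) (v : Fin n) (p : Fin n → Λ × G × I) :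
    SgTerm.eval (reesMul P) (obsT i0 l0 O v) p = (l0, obsVal P O (p v), i0) := by
  have hA := reesMul_assoc P
  rcases O with i | l <;>
    simp [obsT, eval_tcat _ hA, eval_constT, eval_varT, reesMul, obsVal, hP.1, hP.2,
      mul_assoc]

lemma reesMul_H (g h : G) :
    reesMul P ((l0, g, i0) : Λ × G × I) (l0, h, i0) = (l0, g * h, i0) := by
  simp [reesMul, hP.2 l0]

def tpowT (T : SgTerm (Λ × G × I) n) : ℕ → SgTerm (Λ × G × I) n
  | 0 => T
  | m+1 => tcat (tpowT T m) T

lemma eval_tpowT {T : SgTerm (Λ × G × I) n} {p : Fin n → Λ × G × I} {g : G}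
    (hT : SgTerm.eval (reesMul P) T p = (l0, g, i0)) (m : ℕ) :
    SgTerm.eval (reesMul P) (tpowT T m) p = (l0, g ^ (m + 1), i0) := by
  induction m with
  | zero => rw [tpowT, hT, pow_one]
  | succ m ih =>
    rw [tpowT, eval_tcat _ (reesMul_assoc P), ih, hT, reesMul_H P i0 l0 hP, ← pow_succ]

omit hP

variable [Fintype G]

lemma pow_inv_card (g : G) : g ^ (2 * Fintype.card G - 1) = g⁻¹ := by
  have hc : 1 ≤ Fintype.card G := Fintype.card_pos
  have h1 : g ^ Fintype.card G = 1 := pow_card_eq_one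
  have he : 2 * Fintype.card G - 1 = Fintype.card G + (Fintype.card G - 1) := by omega
  rw [he, pow_add, h1, one_mul]
  have h2 : g ^ (Fintype.card G - 1) * g = 1 := by
    rw [← pow_succ]
    have : Fintype.card G - 1 + 1 = Fintype.card G := by omega
    rw [this, h1]
  exact eq_inv_of_mul_eq_one_left h2

def invT (T : SgTerm (Λ × G × I) n) : SgTerm (Λ × G × I) n :=
  tpowT T (2 * Fintype.card G - 2)

include hP

lemma eval_invT {T : SgTerm (Λ × G × I) n} {p : Fin n → Λ × G × I} {g : G}
    (hT : SgTerm.eval (reesMul P) T p = (l0, g, i0)) :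
    SgTerm.eval (reesMul P) (invT T) p = (l0, g⁻¹, i0) := by
  rw [invT, eval_tpowT P i0 l0 hP hT]
  congr 1
  have hc : 1 ≤ Fintype.card G := Fintype.card_pos
  have : 2 * Fintype.card G - 2 + 1 = 2 * Fintype.card G - 1 := by omega
  rw [this, pow_inv_card]

/-- the `A` and `B` terms and their values -/
def aVal (O : I ⊕ Λ) (p : Fin 4 → Λ × G × I) : G :=
  obsVal P O (p 0) * (obsVal P O (p 1))⁻¹

def bVal (O : I ⊕ Λ) (p : Fin 4 → Λ × G × I) : G :=
  obsVal P O (p 2) * (obsVal P O (p 3))⁻¹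

def aT (O : I ⊕ Λ) : SgTerm (Λ × G × I) 4 :=
  tcat (obsT i0 l0 O 0) (invT (obsT i0 l0 O 1))

def bT (O : I ⊕ Λ) : SgTerm (Λ × G × I) 4 :=
  tcat (obsT i0 l0 O 2) (invT (obsT i0 l0 O 3))

lemma eval_aT (O : I ⊕ Λ) (p : Fin 4 → Λ × G × I) :
    SgTerm.eval (reesMul P) (aT i0 l0 O) p = (l0, aVal P O p, i0) := by
  rw [aT, eval_tcat _ (reesMul_assoc P), eval_obsT P i0 l0 hP,
    eval_invT P i0 l0 hP (eval_obsT P i0 l0 hP O 1 p), reesMul_H P i0 l0 hP, aVal]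

lemma eval_bT (O : I ⊕ Λ) (p : Fin 4 → Λ × G × I) :
    SgTerm.eval (reesMul P) (bT i0 l0 O) p = (l0, bVal P O p, i0) := by
  rw [bT, eval_tcat _ (reesMul_assoc P), eval_obsT P i0 l0 hP,
    eval_invT P i0 l0 hP (eval_obsT P i0 l0 hP O 3 p), reesMul_H P i0 l0 hP, bVal]

def conjT (g : G) (O : I ⊕ Λ) : SgTerm (Λ × G × I) 4 :=
  tcat (constT (l0, g, i0)) (tcat (bT i0 l0 O) (constT (l0, g⁻¹, i0)))

lemma eval_conjT (g : G) (O : I ⊕ Λ) (p : Fin 4 → Λ × G × I) :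
    SgTerm.eval (reesMul P) (conjT i0 l0 g O) p = (l0, g * bVal P O p * g⁻¹, i0) := by
  rw [conjT, eval_tcat _ (reesMul_assoc P), eval_tcat _ (reesMul_assoc P),
    eval_constT, eval_constT, eval_bT P i0 l0 hP, reesMul_H P i0 l0 hP,
    reesMul_H P i0 l0 hP, mul_assoc]

def eqnL (g : G) (O O' : I ⊕ Λ) : SgTerm (Λ × G × I) 4 :=
  tcat (aT i0 l0 O) (conjT i0 l0 g O')

def eqnR (g : G) (O O' : I ⊕ Λ) : SgTerm (Λ × G × I) 4 :=
  tcat (conjT i0 l0 g O') (aT i0 l0 O)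

lemma eval_eqn_iff (g : G) (O O' : I ⊕ Λ) (p : Fin 4 → Λ × G × I) :
    (SgTerm.eval (reesMul P) (eqnL i0 l0 g O O') p
      = SgTerm.eval (reesMul P) (eqnR i0 l0 g O O') p)
    ↔ aVal P O p * (g * bVal P O' p * g⁻¹) = (g * bVal P O' p * g⁻¹) * aVal P O p := by
  rw [eqnL, eqnR, eval_tcat _ (reesMul_assoc P), eval_tcat _ (reesMul_assoc P),
    eval_aT P i0 l0 hP, eval_conjT P i0 l0 hP, reesMul_H P i0 l0 hP,
    reesMul_H P i0 l0 hP]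
  constructor
  · intro h
    exact congrArg (fun x => x.2.1) h
  · intro h
    rw [h]

lemma obs_sep (hNS : Nonsingular P) {s s' : Λ × G × I}
    (h : ∀ O : I ⊕ Λ, obsVal P O s = obsVal P O s') : s = s' := by
  have hg : s.2.1 = s'.2.1 := by
    have := h (Sum.inl i0)
    simp only [obsVal, hP.2, one_mul] at this
    exact this
  have hl : s.1 = s'.1 := by
    refine hNS.2 s.1 s'.1 fun i => ?_
    have := h (Sum.inl i)
    simp only [obsVal] at this
    rw [hg] at this
    exact mul_right_cancel this
  have hi : s.2.2 = s'.2.2 := by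
    refine hNS.1 s.2.2 s'.2.2 fun l => ?_
    have := h (Sum.inr l)
    simp only [obsVal] at this
    rw [hg] at this
    exact mul_left_cancel this
  exact Prod.ext hl (Prod.ext hg hi)

lemma sdom_algebraic (hNS : Nonsingular P) (hZ : NZD G) :
    IsAlgebraic (reesMul P) {p : Fin 4 → Λ × G × I | p 0 = p 1 ∨ p 2 = p 3} := by
  classical
  refine ⟨{e | ∃ g O O', e = (eqnL i0 l0 g O O', eqnR i0 l0 g O O')}, ?_⟩
  ext p
  simp only [Set.mem_setOf_eq]
  constructor
  · rintro (h01 | h23) e ⟨g, O, O', rfl⟩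
    · rw [eval_eqn_iff P i0 l0 hP]
      have : aVal P O p = 1 := by rw [aVal, h01, mul_inv_cancel]
      rw [this, one_mul, mul_one]
    · rw [eval_eqn_iff P i0 l0 hP]
      have : bVal P O' p = 1 := by rw [bVal, h23, mul_inv_cancel]
      rw [this, mul_one, mul_inv_cancel, mul_one, one_mul]
  · intro hp
    by_contra hcon
    push_neg at hcon
    obtain ⟨h01, h23⟩ := hcon
    have hO : ∃ O : I ⊕ Λ, obsVal P O (p 0) ≠ obsVal P O (p 1) := by
      by_contra hall
      push_neg at hall
      exact h01 (obs_sep P i0 l0 hP hNS hall)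
    have hO' : ∃ O : I ⊕ Λ, obsVal P O (p 2) ≠ obsVal P O (p 3) := by
      by_contra hall
      push_neg at hall
      exact h23 (obs_sep P i0 l0 hP hNS hall)
    obtain ⟨O, hOne⟩ := hO
    obtain ⟨O', hO'ne⟩ := hO'
    have ha : aVal P O p ≠ 1 := by
      rw [aVal, Ne, mul_inv_eq_one]
      exact hOne
    have hb : bVal P O' p ≠ 1 := by
      rw [bVal, Ne, mul_inv_eq_one]
      exact hO'ne
    have hcomm : ∀ g : G, aVal P O p * (g * bVal P O' p * g⁻¹)
        = (g * bVal P O' p * g⁻¹) * aVal P O p := by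
      intro g
      have := hp _ ⟨g, O, O', rfl⟩
      rwa [eval_eqn_iff P i0 l0 hP] at this
    rcases hZ _ _ hcomm with h | h
    · exact ha h
    · exact hb h

lemma isEqDomain_S (hNS : Nonsingular P) [Nontrivial G] (hZ : NZD G) :
    IsEqDomain (Λ × G × I) (reesMul P) := by
  obtain ⟨g1, hg1⟩ := exists_ne (1 : G)
  refine isEqDomain_of_dom _ (reesMul_assoc P) ⟨(l0, g1, i0), (l0, 1, i0), ?_⟩
    (sdom_algebraic P i0 l0 hP hNS hZ)
  simp [hg1]

end Rees

/-! ### Chunk 6: singular sandwich matrix destroys equational domain -/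

section Sing
variable {G I Λ : Type*} [Group G] (P : I → Λ → G)

lemma evalL_eq_of_ne_head {x y w : Λ × G × I} (ℓ : Fin 2 ⊕ (Λ × G × I))
    (h : ℓ ≠ Sum.inl 0) : evalL ![x, w] ℓ = evalL ![y, w] ℓ := by
  rcases ℓ with j | c
  · by_cases hj : j = 0
    · exact absurd (by rw [hj]) h
    · have hj1 : j = 1 := by omega
      subst hj1; rfl
  · rfl

lemma coord_sets_algebraic (a : Λ × G × I) (i : Fin 2) :
    IsAlgebraic (reesMul P) {p : Fin 2 → Λ × G × I | p i = a} := by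
  refine ⟨{((Sum.inl i, []), (Sum.inr a, []))}, ?_⟩
  ext p
  simp only [Set.mem_setOf_eq, Set.mem_singleton_iff]
  constructor
  · rintro h e rfl
    exact h
  · intro h
    exact h _ rfl

lemma union_coord_eq (a : Λ × G × I) :
    (⋃ k, (![{p : Fin 2 → Λ × G × I | p 0 = a}, {p : Fin 2 → Λ × G × I | p 1 = a}] :
      Fin 2 → Set (Fin 2 → Λ × G × I)) k)
    = {p | p 0 = a} ∪ {p | p 1 = a} := by
  ext p
  simp [Fin.exists_fin_two]

/-- Columns case -/
lemma evalList_col {l m : Λ} (hcol : ∀ i, P i l = P i m) {ga : G} {ia : I}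
    (w : Λ × G × I) (L : List (Fin 2 ⊕ (Λ × G × I)))
    {acc acc' : Λ × G × I} (hacc : acc.2 = acc'.2) :
    (evalList (reesMul P) ![((l, ga, ia) : Λ × G × I), w] L acc).2
      = (evalList (reesMul P) ![((m, ga, ia) : Λ × G × I), w] L acc').2 := by
  induction L generalizing acc acc' with
  | nil => exact hacc
  | cons ℓ L ih =>
    show (evalList (reesMul P) _ L _).2 = (evalList (reesMul P) _ L _).2
    apply ih
    rcases ℓ with j | c
    · by_cases hj : j = 0
      · subst hj
        show (reesMul P acc (l, ga, ia)).2 = (reesMul P acc' (m, ga, ia)).2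
        simp only [reesMul, hacc, hcol]
      · have hj1 : j = 1 := by omega
        subst hj1
        show (reesMul P acc w).2 = (reesMul P acc' w).2
        simp only [reesMul, hacc]
    · show (reesMul P acc c).2 = (reesMul P acc' c).2
      simp only [reesMul, hacc]

lemma eval_col {l m : Λ} (hcol : ∀ i, P i l = P i m) {ga : G} {ia : I}
    (w : Λ × G × I) (t : SgTerm (Λ × G × I) 2) :
    (SgTerm.eval (reesMul P) t ![((l, ga, ia) : Λ × G × I), w]).2
      = (SgTerm.eval (reesMul P) t ![((m, ga, ia) : Λ × G × I), w]).2 := by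
  rw [eval_eq_evalList, eval_eq_evalList]
  apply evalList_col P hcol
  rcases t.1 with j | c
  · by_cases hj : j = 0
    · subst hj; rfl
    · have hj1 : j = 1 := by omega
      subst hj1; rfl
  · rfl

lemma not_eqDomain_of_col (i0 : I) {l m : Λ} (hlm : l ≠ m)
    (hcol : ∀ i, P i l = P i m) : ¬ IsEqDomain (Λ × G × I) (reesMul P) := by
  intro hED
  set a : Λ × G × I := (l, 1, i0) with ha
  set u : Λ × G × I := (m, 1, i0) with hu
  have hau : a ≠ u := fun h => hlm (congrArg Prod.fst h)
  have hY : ∀ k : Fin 2, IsAlgebraic (reesMul P)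
      ((![{p : Fin 2 → Λ × G × I | p 0 = a}, {p : Fin 2 → Λ × G × I | p 1 = a}] :
        Fin 2 → Set (Fin 2 → Λ × G × I)) k) := by
    intro k
    fin_cases k
    · exact coord_sets_algebraic P a 0
    · exact coord_sets_algebraic P a 1
  have hU := hED 2 2 _ hY
  rw [union_coord_eq] at hU
  obtain ⟨Sys, hSys⟩ := hU
  have hval1 : ∀ e ∈ Sys, ∀ w, SgTerm.eval (reesMul P) e.1 ![a, w]
      = SgTerm.eval (reesMul P) e.2 ![a, w] := by
    intro e he w
    have : (![a, w] : Fin 2 → Λ × G × I) ∈ ({p | p 0 = a} ∪ {p | p 1 = a} :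
        Set (Fin 2 → Λ × G × I)) := Or.inl rfl
    rw [hSys] at this
    exact this e he
  have hval2 : ∀ e ∈ Sys, ∀ w, SgTerm.eval (reesMul P) e.1 ![w, a]
      = SgTerm.eval (reesMul P) e.2 ![w, a] := by
    intro e he w
    have : (![w, a] : Fin 2 → Λ × G × I) ∈ ({p | p 0 = a} ∪ {p | p 1 = a} :
        Set (Fin 2 → Λ × G × I)) := Or.inr rfl
    rw [hSys] at this
    exact this e he
  have hmem : (![u, u] : Fin 2 → Λ × G × I) ∈ ({p | p 0 = a} ∪ {p | p 1 = a} :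
      Set (Fin 2 → Λ × G × I)) := by
    rw [hSys]
    intro e he
    have h2 : (SgTerm.eval (reesMul P) e.1 ![u, u]).2
        = (SgTerm.eval (reesMul P) e.2 ![u, u]).2 := by
      have c1 := eval_col P hcol (ga := 1) (ia := i0) u e.1
      have c2 := eval_col P hcol (ga := 1) (ia := i0) u e.2
      rw [← ha, ← hu] at c1 c2
      rw [← c1, ← c2, hval1 e he u]
    have h1 : (SgTerm.eval (reesMul P) e.1 ![u, u]).1
        = (SgTerm.eval (reesMul P) e.2 ![u, u]).1 := by
      rw [eval_fst, eval_fst]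
      by_cases hc1 : e.1.1 = Sum.inl 0 <;> by_cases hc2 : e.2.1 = Sum.inl 0
      · rw [hc1, hc2]
      · exfalso
        have hA := congrArg Prod.fst (hval2 e he a)
        have hB := congrArg Prod.fst (hval2 e he u)
        rw [eval_fst, eval_fst] at hA hB
        rw [hc1] at hA hB
        rw [evalL_eq_of_ne_head (x := u) (y := a) e.2.1 hc2] at hB
        -- hA : (evalL ![a,a] (inl 0)).1 = (evalL ![a,a] e.2.1).1  i.e. l = RHS
        -- hB : m = RHS
        have : (a : Λ × G × I).1 = (u : Λ × G × I).1 := by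
          rw [show (evalL ![a, a] (Sum.inl 0) : Λ × G × I) = a from rfl] at hA
          rw [show (evalL ![u, a] (Sum.inl 0) : Λ × G × I) = u from rfl] at hB
          rw [hA, hB]
        exact hlm this
      · exfalso
        have hA := congrArg Prod.fst (hval2 e he a)
        have hB := congrArg Prod.fst (hval2 e he u)
        rw [eval_fst, eval_fst] at hA hB
        rw [hc2] at hA hB
        rw [evalL_eq_of_ne_head (x := u) (y := a) e.1.1 hc1] at hB
        have : (a : Λ × G × I).1 = (u : Λ × G × I).1 := by
          rw [show (evalL ![a, a] (Sum.inl 0) : Λ × G × I) = a from rfl] at hA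
          rw [show (evalL ![u, a] (Sum.inl 0) : Λ × G × I) = u from rfl] at hB
          rw [← hA, ← hB]
        exact hlm this
      · have hE := congrArg Prod.fst (hval1 e he u)
        rw [eval_fst, eval_fst] at hE
        rw [evalL_eq_of_ne_head (x := u) (y := a) e.1.1 hc1,
          evalL_eq_of_ne_head (x := u) (y := a) e.2.1 hc2]
        exact hE
    exact Prod.ext h1 h2
  rcases hmem with h | h
  · exact hau (by simpa using h.symm)
  · exact hau (by simpa using h.symm)

/-- Rows case -/
lemma evalList_row {ri rj : I} (hrow : ∀ l, P ri l = P rj l) {la : Λ} {ga : G}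
    (w : Λ × G × I) (L : List (Fin 2 ⊕ (Λ × G × I)))
    {acc acc' : Λ × G × I} (h1 : acc.1 = acc'.1) (h2 : acc.2.1 = acc'.2.1)
    (h3 : acc.2.2 = acc'.2.2 ∨ (acc.2.2 = ri ∧ acc'.2.2 = rj)) :
    (evalList (reesMul P) ![((la, ga, ri) : Λ × G × I), w] L acc).1
        = (evalList (reesMul P) ![((la, ga, rj) : Λ × G × I), w] L acc').1
    ∧ (evalList (reesMul P) ![((la, ga, ri) : Λ × G × I), w] L acc).2.1
        = (evalList (reesMul P) ![((la, ga, rj) : Λ × G × I), w] L acc').2.1 := by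
  induction L generalizing acc acc' with
  | nil => exact ⟨h1, h2⟩
  | cons ℓ L ih =>
    show (evalList (reesMul P) _ L _).1 = _ ∧ (evalList (reesMul P) _ L _).2.1 = _
    have hPfac : P acc.2.2 (evalL ![((la, ga, ri) : Λ × G × I), w] ℓ).1
        = P acc'.2.2 (evalL ![((la, ga, rj) : Λ × G × I), w] ℓ).1 ∧
        (evalL ![((la, ga, ri) : Λ × G × I), w] ℓ).2.1
          = (evalL ![((la, ga, rj) : Λ × G × I), w] ℓ).2.1 ∧
        ((evalL ![((la, ga, ri) : Λ × G × I), w] ℓ).2.2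
            = (evalL ![((la, ga, rj) : Λ × G × I), w] ℓ).2.2 ∨
          ((evalL ![((la, ga, ri) : Λ × G × I), w] ℓ).2.2 = ri ∧
            (evalL ![((la, ga, rj) : Λ × G × I), w] ℓ).2.2 = rj)) := by
      rcases ℓ with j | c
      · by_cases hj : j = 0
        · subst hj
          refine ⟨?_, rfl, Or.inr ⟨rfl, rfl⟩⟩
          show P acc.2.2 la = P acc'.2.2 la
          rcases h3 with h | ⟨hi, hj⟩
          · rw [h]
          · rw [hi, hj, hrow]
        · have hj1 : j = 1 := by omega
          subst hj1
          refine ⟨?_, rfl, Or.inl rfl⟩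
          show P acc.2.2 w.1 = P acc'.2.2 w.1
          rcases h3 with h | ⟨hi, hj⟩
          · rw [h]
          · rw [hi, hj, hrow]
      · refine ⟨?_, rfl, Or.inl rfl⟩
        show P acc.2.2 c.1 = P acc'.2.2 c.1
        rcases h3 with h | ⟨hi, hj⟩
        · rw [h]
        · rw [hi, hj, hrow]
    apply ih
    · show acc.1 = acc'.1
      exact h1
    · show acc.2.1 * _ * _ = acc'.2.1 * _ * _
      rw [h2, hPfac.1, hPfac.2.1]
    · exact hPfac.2.2

lemma eval_row {ri rj : I} (hrow : ∀ l, P ri l = P rj l) {la : Λ} {ga : G}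
    (w : Λ × G × I) (t : SgTerm (Λ × G × I) 2) :
    (SgTerm.eval (reesMul P) t ![((la, ga, ri) : Λ × G × I), w]).1
        = (SgTerm.eval (reesMul P) t ![((la, ga, rj) : Λ × G × I), w]).1
    ∧ (SgTerm.eval (reesMul P) t ![((la, ga, ri) : Λ × G × I), w]).2.1
        = (SgTerm.eval (reesMul P) t ![((la, ga, rj) : Λ × G × I), w]).2.1 := by
  rw [eval_eq_evalList, eval_eq_evalList]
  apply evalList_row P hrow
  · rcases t.1 with j | c
    · by_cases hj : j = 0
      · subst hj; rfl
      · have hj1 : j = 1 := by omega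
        subst hj1; rfl
    · rfl
  · rcases t.1 with j | c
    · by_cases hj : j = 0
      · subst hj; rfl
      · have hj1 : j = 1 := by omega
        subst hj1; rfl
    · rfl
  · rcases t.1 with j | c
    · by_cases hj : j = 0
      · subst hj; exact Or.inr ⟨rfl, rfl⟩
      · have hj1 : j = 1 := by omega
        subst hj1; exact Or.inl rfl
    · exact Or.inl rfl

lemma not_eqDomain_of_row (l0 : Λ) {ri rj : I} (hij : ri ≠ rj)
    (hrow : ∀ l, P ri l = P rj l) : ¬ IsEqDomain (Λ × G × I) (reesMul P) := by
  intro hED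
  set a : Λ × G × I := (l0, 1, ri) with ha
  set u : Λ × G × I := (l0, 1, rj) with hu
  have hau : a ≠ u := fun h => hij (congrArg (fun s => s.2.2) h)
  have hY : ∀ k : Fin 2, IsAlgebraic (reesMul P)
      ((![{p : Fin 2 → Λ × G × I | p 0 = a}, {p : Fin 2 → Λ × G × I | p 1 = a}] :
        Fin 2 → Set (Fin 2 → Λ × G × I)) k) := by
    intro k
    fin_cases k
    · exact coord_sets_algebraic P a 0
    · exact coord_sets_algebraic P a 1
  have hU := hED 2 2 _ hY
  rw [union_coord_eq] at hU
  obtain ⟨Sys, hSys⟩ := hU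
  have hval1 : ∀ e ∈ Sys, ∀ w, SgTerm.eval (reesMul P) e.1 ![a, w]
      = SgTerm.eval (reesMul P) e.2 ![a, w] := by
    intro e he w
    have : (![a, w] : Fin 2 → Λ × G × I) ∈ ({p | p 0 = a} ∪ {p | p 1 = a} :
        Set (Fin 2 → Λ × G × I)) := Or.inl rfl
    rw [hSys] at this
    exact this e he
  have hval2 : ∀ e ∈ Sys, ∀ w, SgTerm.eval (reesMul P) e.1 ![w, a]
      = SgTerm.eval (reesMul P) e.2 ![w, a] := by
    intro e he w
    have : (![w, a] : Fin 2 → Λ × G × I) ∈ ({p | p 0 = a} ∪ {p | p 1 = a} :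
        Set (Fin 2 → Λ × G × I)) := Or.inr rfl
    rw [hSys] at this
    exact this e he
  have hlastne : ∀ e ∈ Sys, ¬(lastL e.1 = Sum.inl 0 ↔ ¬ lastL e.2 = Sum.inl 0) := by
    intro e he hmix
    have hA := congrArg (fun s => s.2.2) (hval2 e he a)
    have hB := congrArg (fun s => s.2.2) (hval2 e he u)
    simp only [eval_snd_last] at hA hB
    rcases Classical.em (lastL e.1 = Sum.inl 0) with hc1 | hc1
    · have hc2 : ¬ lastL e.2 = Sum.inl 0 := hmix.1 hc1
      rw [hc1] at hA hB
      rw [evalL_eq_of_ne_head (x := u) (y := a) (lastL e.2) hc2] at hB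
      have : (a : Λ × G × I).2.2 = (u : Λ × G × I).2.2 := by
        rw [show (evalL ![a, a] (Sum.inl 0) : Λ × G × I) = a from rfl] at hA
        rw [show (evalL ![u, a] (Sum.inl 0) : Λ × G × I) = u from rfl] at hB
        rw [hA, hB]
      exact hij this
    · have hc2 : lastL e.2 = Sum.inl 0 := by
        by_contra hc2
        exact hc1 (hmix.2 hc2)
      rw [hc2] at hA hB
      rw [evalL_eq_of_ne_head (x := u) (y := a) (lastL e.1) hc1] at hB
      have : (a : Λ × G × I).2.2 = (u : Λ × G × I).2.2 := by
        rw [show (evalL ![a, a] (Sum.inl 0) : Λ × G × I) = a from rfl] at hA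
        rw [show (evalL ![u, a] (Sum.inl 0) : Λ × G × I) = u from rfl] at hB
        rw [← hA, ← hB]
      exact hij this
  have hmem : (![u, u] : Fin 2 → Λ × G × I) ∈ ({p | p 0 = a} ∪ {p | p 1 = a} :
      Set (Fin 2 → Λ × G × I)) := by
    rw [hSys]
    intro e he
    have key1 := eval_row P hrow (la := l0) (ga := 1) u e.1
    have key2 := eval_row P hrow (la := l0) (ga := 1) u e.2
    rw [← ha, ← hu] at key1 key2
    have h1 : (SgTerm.eval (reesMul P) e.1 ![u, u]).1
        = (SgTerm.eval (reesMul P) e.2 ![u, u]).1 := by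
      rw [← key1.1, ← key2.1, hval1 e he u]
    have h21 : (SgTerm.eval (reesMul P) e.1 ![u, u]).2.1
        = (SgTerm.eval (reesMul P) e.2 ![u, u]).2.1 := by
      rw [← key1.2, ← key2.2, hval1 e he u]
    have h22 : (SgTerm.eval (reesMul P) e.1 ![u, u]).2.2
        = (SgTerm.eval (reesMul P) e.2 ![u, u]).2.2 := by
      rw [eval_snd_last, eval_snd_last]
      by_cases hc1 : lastL e.1 = Sum.inl 0 <;> by_cases hc2 : lastL e.2 = Sum.inl 0
      · rw [hc1, hc2]
      · exact absurd (iff_of_true hc1 hc2) (hlastne e he)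
      · exact absurd (iff_of_false hc1 (not_not_intro hc2)) (hlastne e he)
      · have hE := congrArg (fun s => s.2.2) (hval1 e he u)
        simp only [eval_snd_last] at hE
        rw [evalL_eq_of_ne_head (x := u) (y := a) (lastL e.1) hc1,
          evalL_eq_of_ne_head (x := u) (y := a) (lastL e.2) hc2]
        exact hE
    exact Prod.ext h1 (Prod.ext h21 h22)
  rcases hmem with h | h
  · exact hau (by simpa using h.symm)
  · exact hau (by simpa using h.symm)

end Sing

/-! ### Chunk 7: IsEqDomain of the Rees semigroup gives NZD of G -/

section SNZD
variable {G I Λ : Type*} [Group G] {P : I → Λ → G}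

def SInvP (b : G) (E1 E2 E3 E4 : Λ × G × I) : Prop :=
  E1.1 = E4.1 ∧ E2.1 = E4.1 ∧ E3.1 = E4.1 ∧
  E1.2.2 = E4.2.2 ∧ E2.2.2 = E4.2.2 ∧ E3.2.2 = E4.2.2 ∧
  InvM b E1.2.1 E2.2.1 E3.2.1 E4.2.1

lemma sInv_step (b : G) {E1 E2 E3 E4 v1 v2 v3 v4 : Λ × G × I}
    (h : SInvP b E1 E2 E3 E4)
    (hv1 : v1.1 = v4.1) (hv2 : v2.1 = v4.1) (hv3 : v3.1 = v4.1)
    (hw1 : v1.2.2 = v4.2.2) (hw2 : v2.2.2 = v4.2.2) (hw3 : v3.2.2 = v4.2.2)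
    (hm : (v1.2.1 = v4.2.1 ∧ v2.2.1 = v4.2.1 ∧ v3.2.1 = v4.2.1)
        ∨ (v1.2.1 ∈ Zcl b ∧ v2.2.1 = v1.2.1 ∧ v3.2.1 = 1 ∧ v4.2.1 = 1)
        ∨ (v1.2.1 ∈ Ncl b ∧ v3.2.1 = v1.2.1 ∧ v2.2.1 = 1 ∧ v4.2.1 = 1)) :
    SInvP b (reesMul P E1 v1) (reesMul P E2 v2) (reesMul P E3 v3) (reesMul P E4 v4) := by
  obtain ⟨f1, f2, f3, g1, g2, g3, inv⟩ := h
  refine ⟨f1, f2, f3, hw1, hw2, hw3, ?_⟩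
  show InvM b (E1.2.1 * P E1.2.2 v1.1 * v1.2.1) (E2.2.1 * P E2.2.2 v2.1 * v2.2.1)
    (E3.2.1 * P E3.2.2 v3.1 * v3.2.1) (E4.2.1 * P E4.2.2 v4.1 * v4.2.1)
  rw [g1, g2, g3, hv1, hv2, hv3]
  set u := P E4.2.2 v4.1 with hu
  rcases hm with ⟨e1, e2, e3⟩ | ⟨hz, e2, e3, e4⟩ | ⟨hν, e3, e2, e4⟩
  · rw [e1, e2, e3]
    have := invM_K1 (u * v4.2.1) inv
    simpa [mul_assoc] using this
  · rw [e2, e3, e4, mul_one]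
    have := invM_K2 hz (invM_K1 u inv)
    simpa [mul_assoc] using this
  · rw [e2, e3, e4, mul_one]
    have := invM_K3 hν (invM_K1 u inv)
    simpa [mul_assoc] using this

lemma sInv_all (i0 : I) (l0 : Λ) (a b : G) (ha : a ∈ Zcl b) (t : SgTerm (Λ × G × I) 4) :
    SInvP b
      (SgTerm.eval (reesMul P) t
        ![((l0, a, i0) : Λ × G × I), (l0, 1, i0), (l0, b, i0), (l0, 1, i0)])
      (SgTerm.eval (reesMul P) t
        ![((l0, a, i0) : Λ × G × I), (l0, 1, i0), (l0, 1, i0), (l0, 1, i0)])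
      (SgTerm.eval (reesMul P) t
        ![((l0, 1, i0) : Λ × G × I), (l0, 1, i0), (l0, b, i0), (l0, 1, i0)])
      (SgTerm.eval (reesMul P) t
        ![((l0, 1, i0) : Λ × G × I), (l0, 1, i0), (l0, 1, i0), (l0, 1, i0)]) := by
  obtain ⟨h, L⟩ := t
  induction L using List.reverseRecOn with
  | nil =>
    rcases h with j | c
    · by_cases hj0 : j = 0
      · subst hj0
        show SInvP b ((l0, a, i0) : Λ × G × I) (l0, a, i0) (l0, 1, i0) (l0, 1, i0)
        exact ⟨rfl, rfl, rfl, rfl, rfl, rfl, a, 1, ha, one_mem _, by simp, by simp, by simp⟩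
      by_cases hj1 : j = 1
      · subst hj1
        exact ⟨rfl, rfl, rfl, rfl, rfl, rfl, invM_const b 1⟩
      by_cases hj2 : j = 2
      · subst hj2
        show SInvP b ((l0, b, i0) : Λ × G × I) (l0, 1, i0) (l0, b, i0) (l0, 1, i0)
        exact ⟨rfl, rfl, rfl, rfl, rfl, rfl, 1, b, one_mem _, mem_ncl_self b,
          by simp, by simp, by simp⟩
      · have hj3 : j = 3 := by omega
        subst hj3
        exact ⟨rfl, rfl, rfl, rfl, rfl, rfl, invM_const b 1⟩
    · exact ⟨rfl, rfl, rfl, rfl, rfl, rfl, invM_const b c.2.1⟩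
  | append_singleton L ℓ ih =>
    rw [eval_concat_letter P, eval_concat_letter P, eval_concat_letter P,
      eval_concat_letter P]
    rcases ℓ with j | c
    · by_cases hj0 : j = 0
      · subst hj0
        exact sInv_step b ih rfl rfl rfl rfl rfl rfl
          (Or.inr (Or.inl ⟨ha, rfl, rfl, rfl⟩))
      by_cases hj1 : j = 1
      · subst hj1
        exact sInv_step b ih rfl rfl rfl rfl rfl rfl (Or.inl ⟨rfl, rfl, rfl⟩)
      by_cases hj2 : j = 2
      · subst hj2
        exact sInv_step b ih rfl rfl rfl rfl rfl rfl
          (Or.inr (Or.inr ⟨mem_ncl_self b, rfl, rfl, rfl⟩))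
      · have hj3 : j = 3 := by omega
        subst hj3
        exact sInv_step b ih rfl rfl rfl rfl rfl rfl (Or.inl ⟨rfl, rfl, rfl⟩)
    · exact sInv_step b ih rfl rfl rfl rfl rfl rfl (Or.inl ⟨rfl, rfl, rfl⟩)

lemma coordpair_algebraic (v w : Fin 4) :
    IsAlgebraic (reesMul P) {p : Fin 4 → Λ × G × I | p v = p w} := by
  refine ⟨{((Sum.inl v, []), (Sum.inl w, []))}, ?_⟩
  ext p
  simp only [Set.mem_setOf_eq, Set.mem_singleton_iff]
  constructor
  · rintro h e rfl
    exact h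
  · intro h
    exact h _ rfl

lemma nzd_of_eqDomain_S (i0 : I) (l0 : Λ)
    (hED : IsEqDomain (Λ × G × I) (reesMul P)) : NZD G := by
  intro a b hab
  have ha : a ∈ Zcl b := mem_zcl_of_comm hab
  have hY : ∀ k : Fin 2, IsAlgebraic (reesMul P)
      ((![{p : Fin 4 → Λ × G × I | p 0 = p 1}, {p : Fin 4 → Λ × G × I | p 2 = p 3}] :
        Fin 2 → Set (Fin 4 → Λ × G × I)) k) := by
    intro k
    fin_cases k
    · exact coordpair_algebraic 0 1
    · exact coordpair_algebraic 2 3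
  have hU := hED 4 2 _ hY
  have hUeq : (⋃ k, (![{p : Fin 4 → Λ × G × I | p 0 = p 1},
      {p : Fin 4 → Λ × G × I | p 2 = p 3}] : Fin 2 → Set (Fin 4 → Λ × G × I)) k)
      = {p | p 0 = p 1 ∨ p 2 = p 3} := by
    ext p
    simp [Fin.exists_fin_two]
  rw [hUeq] at hU
  obtain ⟨Sys, hSys⟩ := hU
  set q1 : Fin 4 → Λ × G × I := ![(l0, a, i0), (l0, 1, i0), (l0, b, i0), (l0, 1, i0)]
  set q2 : Fin 4 → Λ × G × I := ![(l0, a, i0), (l0, 1, i0), (l0, 1, i0), (l0, 1, i0)]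
  set q3 : Fin 4 → Λ × G × I := ![(l0, 1, i0), (l0, 1, i0), (l0, b, i0), (l0, 1, i0)]
  set q4 : Fin 4 → Λ × G × I := ![(l0, 1, i0), (l0, 1, i0), (l0, 1, i0), (l0, 1, i0)]
  have hq2 : q2 ∈ ({p | p 0 = p 1 ∨ p 2 = p 3} : Set (Fin 4 → Λ × G × I)) := Or.inr rfl
  have hq3 : q3 ∈ ({p | p 0 = p 1 ∨ p 2 = p 3} : Set (Fin 4 → Λ × G × I)) := Or.inl rfl
  have hq4 : q4 ∈ ({p | p 0 = p 1 ∨ p 2 = p 3} : Set (Fin 4 → Λ × G × I)) := Or.inl rfl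
  rw [hSys] at hq2 hq3 hq4
  have hmem : q1 ∈ ({p | p 0 = p 1 ∨ p 2 = p 3} : Set (Fin 4 → Λ × G × I)) := by
    rw [hSys]
    intro e he
    have k1 := sInv_all (P := P) i0 l0 a b ha e.1
    have k2 := sInv_all (P := P) i0 l0 a b ha e.2
    have v2 := hq2 e he
    have v3 := hq3 e he
    have v4 := hq4 e he
    obtain ⟨a11, a12, a13, b11, b12, b13, i1⟩ := k1
    obtain ⟨a21, a22, a23, b21, b22, b23, i2⟩ := k2
    refine Prod.ext ?_ (Prod.ext ?_ ?_)
    · rw [a11, a21, congrArg Prod.fst v4]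
    · rw [invM_conclusion i1, invM_conclusion i2,
        congrArg (fun s => s.2.1) v2, congrArg (fun s => s.2.1) v3,
        congrArg (fun s => s.2.1) v4]
    · rw [b11, b21, congrArg (fun s => s.2.2) v4]
  rcases hmem with h | h
  · left
    have := congrArg (fun s => s.2.1) h
    simpa [q1] using this
  · right
    have := congrArg (fun s => s.2.1) h
    simpa [q1] using this

end SNZD


/-- Main theorem: a finite simple semigroup `S = M(G; I, Λ; P)` with normalized
`P` is an equational domain iff `P` is nonsingular and `G` is an equational
domain in the group language with constants. -/
theorem rees_eqDomain_iff (G I Λ : Type*) [Group G] [Fintype G] [Fintype I]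
    [Fintype Λ] (P : I → Λ → G) (i0 : I) (l0 : Λ) (hP : Normalized P i0 l0) :
    IsEqDomain (Λ × G × I) (reesMul P) ↔ Nonsingular P ∧ IsGEqDomain G := by
  constructor
  · intro hED
    have hNS : Nonsingular P := by
      constructor
      · intro i j h
        by_contra hij
        exact not_eqDomain_of_row P l0 hij h hED
      · intro l m h
        by_contra hlm
        exact not_eqDomain_of_col P i0 hlm h hED
    have hnzd : NZD G := nzd_of_eqDomain_S i0 l0 hED
    have hGnt : Nontrivial G := by
      by_contra h
      have hGsub : Subsingleton G := not_nontrivial_iff_subsingleton.mp h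
      have hIsub : Subsingleton I := ⟨fun i j => hNS.1 i j (fun l => Subsingleton.elim _ _)⟩
      have hΛsub : Subsingleton Λ := ⟨fun l m => hNS.2 l m (fun i => Subsingleton.elim _ _)⟩
      have hSsub : Subsingleton (Λ × G × I) := by
        constructor
        intro s s'
        exact Prod.ext (Subsingleton.elim _ _)
          (Prod.ext (Subsingleton.elim _ _) (Subsingleton.elim _ _))
      obtain ⟨Sys, hSys⟩ := hED 0 0 (fun k => k.elim0) (fun k => k.elim0)
      have hm : (Fin.elim0 : Fin 0 → Λ × G × I) ∈
          {p : Fin 0 → Λ × G × I | ∀ e ∈ Sys,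
            SgTerm.eval (reesMul P) e.1 p = SgTerm.eval (reesMul P) e.2 p} :=
        fun e _ => Subsingleton.elim _ _
      rw [← hSys] at hm
      simp at hm
    exact ⟨hNS, @isGEqDomain_of_nzd G _ hGnt hnzd⟩
  · rintro ⟨hNS, hGED⟩
    have hGnt : Nontrivial G := nontrivial_of_isGEqDomain hGED
    have hnzd : NZD G := nzd_of_isGEqDomain hGED
    exact @isEqDomain_S G I Λ _ P i0 l0 hP _ hNS hGnt hnzd

end Stmt
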